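/- Terminating Saalschütz from the symmetric formula: for complex a, c, d and a nonnegative integer n (generic parameters), 3F2(a, a+c+d-1-n, -n; a+c-n, a+d-n; 1) = ((1-c)_n (1-d)_n) / ((1-a-c)_n (1-a-d)_n). -/
import Mathlib


/-- Rising factorial (Pochhammer symbol) `(x)_k = x(x+1)⋯(x+k-1)`. -/
noncomputable def poch (x : ℂ) (k : ℕ) : ℂ := ∏ i ∈ Finset.range k, (x + i)

lemma poch_zero (x : ℂ) : poch x 0 = 1 := by simp [poch]

lemma poch_succ (x : ℂ) (k : ℕ) : poch x (k+1) = poch x k * (x + k) := by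
  simp [poch, Finset.prod_range_succ]

lemma poch_shift (x : ℂ) (k : ℕ) : poch x (k+1) = x * poch (x+1) k := by
  rw [poch, poch, Finset.prod_range_succ']
  have h : ∀ i ∈ Finset.range k, (x + ((i+1 : ℕ):ℂ)) = (x + 1 + (i:ℂ)) := by
    intro i _; push_cast; ring
  rw [Finset.prod_congr rfl h]
  simp [mul_comm]

lemma poch_add (x : ℂ) (k m : ℕ) : poch x (k + m) = poch x k * poch (x + k) m := by
  induction m with
  | zero => simp [poch_zero]
  | succ m ih => rw [← Nat.add_assoc, poch_succ, ih, poch_succ]; push_cast; ring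

lemma poch_reflect (x : ℂ) (n : ℕ) : poch (x - n) n = (-1)^n * poch (1 - x) n := by
  induction n with
  | zero => simp [poch_zero]
  | succ n ih =>
    rw [poch_shift]
    have e : x - ((n+1 : ℕ):ℂ) + 1 = x - n := by push_cast; ring
    rw [e, ih, poch_succ]
    push_cast; ring

lemma poch_neg_nat (n k : ℕ) (h : k ≤ n) :
    poch (-(n:ℂ)) k = (-1)^k * (n.choose k : ℂ) * (k.factorial : ℂ) := by
  induction k with
  | zero => simp [poch_zero]
  | succ k ih =>
    have hk : k ≤ n := Nat.le_of_succ_le h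
    rw [poch_succ, ih hk]
    have hc : (n.choose (k+1) : ℂ) * ((k:ℂ)+1) = (n.choose k : ℂ) * ((n:ℂ) - k) := by
      have := Nat.choose_succ_right_eq n k
      have h2 := congrArg (Nat.cast (R := ℂ)) this
      push_cast [Nat.cast_sub hk] at h2
      convert h2 using 2 <;> push_cast <;> ring
    have hfac : ((k+1).factorial : ℂ) = (k.factorial : ℂ) * ((k:ℂ)+1) := by
      rw [Nat.factorial_succ]; push_cast; ring
    rw [hfac, pow_succ]
    push_cast
    linear_combination ((-1:ℂ))^k * (k.factorial : ℂ) * hc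

noncomputable def Uf (a c d : ℂ) (n k : ℕ) : ℂ :=
  (-1)^k * (n.choose k : ℂ) * poch a k * poch (a+c+d-1-n) k *
    poch (a+c-(n:ℂ)+k) (n-k) * poch (a+d-(n:ℂ)+k) (n-k)

noncomputable def Gf (a c d : ℂ) (n : ℕ) : ℕ → ℂ
  | 0 => 0
  | (j+1) => (-1)^(j+1) * (n.choose j : ℂ) * poch a (j+1) * poch (a+c+d-1-n) j *
      poch (a+c-(n:ℂ)+j) (n-j) * poch (a+d-(n:ℂ)+j) (n-j) * (2*n+2-a-c-d-j)

lemma step (a c d : ℂ) (n k : ℕ) (hk : k ≤ n + 1) :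
    Uf a c d (n+1) k - ((n:ℂ)+1-c) * ((n:ℂ)+1-d) * Uf a c d n k
      = Gf a c d n (k+1) - Gf a c d n k := by
  match k with
  | 0 =>
    simp only [Uf, Gf]
    push_cast
    have hp1 : poch a 1 = a := by simp [poch]
    have hc1 : poch (a+c-((n:ℂ)+1)+0) (n+1) = (a+c-((n:ℂ)+1)) * poch (a+c-(n:ℂ)+0) (n-0) := by
      rw [add_zero, poch_shift, Nat.sub_zero,
        show a+c-((n:ℂ)+1)+1 = a+c-(n:ℂ)+0 from by ring]
    have hd1 : poch (a+d-((n:ℂ)+1)+0) (n+1) = (a+d-((n:ℂ)+1)) * poch (a+d-(n:ℂ)+0) (n-0) := by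
      rw [add_zero, poch_shift, Nat.sub_zero,
        show a+d-((n:ℂ)+1)+1 = a+d-(n:ℂ)+0 from by ring]
    rw [hp1, hc1, hd1]
    simp only [Nat.choose_zero_right, poch_zero, Nat.cast_one, pow_zero, pow_one]
    ring
  | (j+1) =>
    rcases Nat.lt_or_ge j n with hj | hj
    · obtain ⟨m, rfl⟩ : ∃ m, n = j+1+m := ⟨n-j-1, by omega⟩
      simp only [Uf, Gf]
      have e1 : j+1+m - j = m+1 := by omega
      have e2 : j+1+m - (j+1) = m := by omega
      have e3 : j+1+m+1 - (j+1) = m+1 := by omega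
      rw [e1, e2, e3, Nat.choose_succ_succ (j+1+m) j]
      simp only [Nat.succ_eq_add_one]
      push_cast
      have r1 : poch (a + c + d - 1 - ((j:ℂ) + 1 + (m:ℂ) + 1)) (j + 1)
          = (a+c+d-2-((j:ℂ)+1+(m:ℂ))) * poch (a + c + d - 1 - ((j:ℂ) + 1 + (m:ℂ))) j := by
        rw [poch_shift, show a + c + d - 1 - ((j:ℂ) + 1 + (m:ℂ) + 1) + 1
          = a + c + d - 1 - ((j:ℂ) + 1 + (m:ℂ)) from by ring,
          show a + c + d - 1 - ((j:ℂ) + 1 + (m:ℂ) + 1) = a+c+d-2-((j:ℂ)+1+(m:ℂ)) from by ring]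
      have r2 : poch (a + c - ((j:ℂ) + 1 + (m:ℂ) + 1) + ((j:ℂ) + 1)) (m + 1)
          = (a + c - ((j:ℂ) + 1 + (m:ℂ)) + (j:ℂ)) * poch (a + c - ((j:ℂ) + 1 + (m:ℂ)) + ((j:ℂ) + 1)) m := by
        rw [poch_shift, show a + c - ((j:ℂ) + 1 + (m:ℂ) + 1) + ((j:ℂ) + 1) + 1
          = a + c - ((j:ℂ) + 1 + (m:ℂ)) + ((j:ℂ) + 1) from by ring,
          show a + c - ((j:ℂ) + 1 + (m:ℂ) + 1) + ((j:ℂ) + 1) = a + c - ((j:ℂ) + 1 + (m:ℂ)) + (j:ℂ) from by ring]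
      have r3 : poch (a + d - ((j:ℂ) + 1 + (m:ℂ) + 1) + ((j:ℂ) + 1)) (m + 1)
          = (a + d - ((j:ℂ) + 1 + (m:ℂ)) + (j:ℂ)) * poch (a + d - ((j:ℂ) + 1 + (m:ℂ)) + ((j:ℂ) + 1)) m := by
        rw [poch_shift, show a + d - ((j:ℂ) + 1 + (m:ℂ) + 1) + ((j:ℂ) + 1) + 1
          = a + d - ((j:ℂ) + 1 + (m:ℂ)) + ((j:ℂ) + 1) from by ring,
          show a + d - ((j:ℂ) + 1 + (m:ℂ) + 1) + ((j:ℂ) + 1) = a + d - ((j:ℂ) + 1 + (m:ℂ)) + (j:ℂ) from by ring]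
      have r4 : poch (a + c + d - 1 - ((j:ℂ) + 1 + (m:ℂ))) (j + 1)
          = poch (a + c + d - 1 - ((j:ℂ) + 1 + (m:ℂ))) j * (a + c + d - 1 - ((j:ℂ) + 1 + (m:ℂ)) + (j:ℂ)) := by
        rw [poch_succ]
      have r5 : poch a (j + 1 + 1) = poch a (j+1) * (a + ((j:ℂ)+1)) := by
        rw [poch_succ]; push_cast; ring
      have r6 : poch (a + c - ((j:ℂ) + 1 + (m:ℂ)) + (j:ℂ)) (m + 1)
          = (a + c - ((j:ℂ) + 1 + (m:ℂ)) + (j:ℂ)) * poch (a + c - ((j:ℂ) + 1 + (m:ℂ)) + ((j:ℂ) + 1)) m := by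
        rw [poch_shift, show a + c - ((j:ℂ) + 1 + (m:ℂ)) + (j:ℂ) + 1
          = a + c - ((j:ℂ) + 1 + (m:ℂ)) + ((j:ℂ) + 1) from by ring]
      have r7 : poch (a + d - ((j:ℂ) + 1 + (m:ℂ)) + (j:ℂ)) (m + 1)
          = (a + d - ((j:ℂ) + 1 + (m:ℂ)) + (j:ℂ)) * poch (a + d - ((j:ℂ) + 1 + (m:ℂ)) + ((j:ℂ) + 1)) m := by
        rw [poch_shift, show a + d - ((j:ℂ) + 1 + (m:ℂ)) + (j:ℂ) + 1
          = a + d - ((j:ℂ) + 1 + (m:ℂ)) + ((j:ℂ) + 1) from by ring]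
      rw [r1, r2, r3, r4, r5, r6, r7]
      have hrel : (((j+1+m).choose (j+1) : ℕ) : ℂ) * ((j:ℂ)+1)
          = (((j+1+m).choose j : ℕ) : ℂ) * ((m:ℂ)+1) := by
        have h := Nat.choose_succ_right_eq (j+1+m) j
        rw [e1] at h
        have h2 := congrArg (Nat.cast (R := ℂ)) h
        push_cast at h2
        exact h2
      linear_combination (-((-1:ℂ))^(j+1) * poch a (j+1) * poch (a + c + d - 1 - ((j:ℂ) + 1 + (m:ℂ))) j
        * poch (a + c - ((j:ℂ) + 1 + (m:ℂ)) + ((j:ℂ) + 1)) m * poch (a + d - ((j:ℂ) + 1 + (m:ℂ)) + ((j:ℂ) + 1)) m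
        * (a + c - ((j:ℂ) + 1 + (m:ℂ)) + (j:ℂ)) * (a + d - ((j:ℂ) + 1 + (m:ℂ)) + (j:ℂ))) * hrel
    · have hjn : j = n := by omega
      subst hjn
      simp only [Uf, Gf]
      have e1 : j+1-(j+1) = 0 := by omega
      have e2 : j - (j+1) = 0 := by omega
      have e3 : j - j = 0 := by omega
      rw [e1, e2, e3, Nat.choose_self, Nat.choose_succ_self, Nat.choose_self]
      push_cast
      have r1 : poch (a+c+d-1-((j:ℂ)+1)) (j+1) = (a+c+d-2-(j:ℂ)) * poch (a+c+d-1-(j:ℂ)) j := by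
        rw [poch_shift, show a+c+d-1-((j:ℂ)+1)+1 = a+c+d-1-(j:ℂ) from by ring,
          show a+c+d-1-((j:ℂ)+1) = a+c+d-2-(j:ℂ) from by ring]
      rw [r1]
      simp only [poch_zero, pow_succ]
      ring

lemma star (n : ℕ) (a c d : ℂ) :
    ∑ k ∈ Finset.range (n+1), Uf a c d n k = poch (1-c) n * poch (1-d) n := by
  induction n generalizing a c d with
  | zero => simp [Uf, poch_zero]
  | succ n ih =>
    have hsum : ∑ k ∈ Finset.range (n+2), Uf a c d (n+1) k
        = ((n:ℂ)+1-c)*((n:ℂ)+1-d) * ∑ k ∈ Finset.range (n+2), Uf a c d n k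
          + ∑ k ∈ Finset.range (n+2), (Gf a c d n (k+1) - Gf a c d n k) := by
      rw [Finset.mul_sum, ← Finset.sum_add_distrib]
      apply Finset.sum_congr rfl
      intro k hk
      have hk' : k ≤ n+1 := by
        have := Finset.mem_range.mp hk; omega
      linear_combination step a c d n k hk'
    rw [hsum, Finset.sum_range_sub (Gf a c d n)]
    have gtop : Gf a c d n (n+2) = 0 := by
      simp [Gf, Nat.choose_succ_self]
    have g0 : Gf a c d n 0 = 0 := rfl
    have utop : Uf a c d n (n+1) = 0 := by simp [Uf, Nat.choose_succ_self]
    rw [gtop, g0, Finset.sum_range_succ, utop, add_zero, ih, poch_succ, poch_succ]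
    push_cast
    ring

/-- Terminating Saalschütz-type identity: the case `b = -n` of the symmetric formula. -/
theorem terminating_saalschutz (a c d : ℂ) (n : ℕ)
    (hden : ∀ k ≤ n, poch (a + c - n) k ≠ 0 ∧ poch (a + d - n) k ≠ 0)
    (h1 : poch (1 - a - c) n ≠ 0) (h2 : poch (1 - a - d) n ≠ 0) :
    ∑ k ∈ Finset.range (n + 1),
      poch a k * poch (a + c + d - 1 - n) k * poch (-(n : ℂ)) k /
        ((k.factorial : ℂ) * poch (a + c - n) k * poch (a + d - n) k)
      = poch (1 - c) n * poch (1 - d) n / (poch (1 - a - c) n * poch (1 - a - d) n) := by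
  have hDnum : poch (a + c - n) n * poch (a + d - n) n
      = poch (1 - a - c) n * poch (1 - a - d) n := by
    have rc : poch (a + c - n) n = (-1:ℂ)^n * poch (1 - (a+c)) n := poch_reflect (a+c) n
    have rd : poch (a + d - n) n = (-1:ℂ)^n * poch (1 - (a+d)) n := poch_reflect (a+d) n
    have hpow : ((-1:ℂ))^n * ((-1:ℂ))^n = 1 := by
      rw [← pow_add]; exact Even.neg_one_pow ⟨n, rfl⟩
    rw [rc, rd, show (1:ℂ) - (a+c) = 1-a-c from by ring, show (1:ℂ) - (a+d) = 1-a-d from by ring]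
    linear_combination (poch (1-a-c) n * poch (1-a-d) n) * hpow
  have hD : poch (a + c - n) n * poch (a + d - n) n ≠ 0 :=
    mul_ne_zero (hden n le_rfl).1 (hden n le_rfl).2
  have hterm : ∀ k ∈ Finset.range (n+1),
      poch a k * poch (a + c + d - 1 - n) k * poch (-(n : ℂ)) k /
        ((k.factorial : ℂ) * poch (a + c - n) k * poch (a + d - n) k)
      = Uf a c d n k / (poch (a + c - n) n * poch (a + d - n) n) := by
    intro k hk
    have hkn : k ≤ n := by have := Finset.mem_range.mp hk; omega
    obtain ⟨hc, hd⟩ := hden k hkn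
    have hfac : ((k.factorial : ℂ)) ≠ 0 := by
      exact_mod_cast Nat.cast_ne_zero.mpr (Nat.factorial_ne_zero k)
    have hsplitc : poch (a + c - n) n = poch (a + c - n) k * poch (a + c - (n:ℂ) + k) (n - k) := by
      have h := poch_add (a + c - n) k (n - k)
      rw [show k + (n - k) = n from by omega] at h
      exact h
    have hsplitd : poch (a + d - n) n = poch (a + d - n) k * poch (a + d - (n:ℂ) + k) (n - k) := by
      have h := poch_add (a + d - n) k (n - k)
      rw [show k + (n - k) = n from by omega] at h
      exact h
    rw [poch_neg_nat n k hkn, div_eq_div_iff (mul_ne_zero (mul_ne_zero hfac hc) hd) hD]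
    rw [Uf, hsplitc, hsplitd]; ring
  rw [Finset.sum_congr rfl hterm, ← Finset.sum_div, star n a c d, hDnum]
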